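/- For c > 0 and 𝛍 ∈ ℂ, let M = [[sinh(c/2), cosh(c/2)], [−sinh(c/2), cosh(c/2)]], J = [[0, −coth(c/2)], [tanh(c/2), 0]], and T_𝛍 = [[cosh(𝛍/2), −sinh(𝛍/2)·coth(c/2)], [−sinh(𝛍/2)·tanh(c/2), cosh(𝛍/2)]]. Then for every z in the upper half-plane (avoiding poles), the Möbius transformations satisfy M(T_𝛍(J(z))) = e^{−𝛍} · (sinh(c/2)·z − cosh(c/2)) / (sinh(c/2)·z + cosh(c/2)), and consequently M(z) · M(T_𝛍(J(z))) = −e^{−𝛍}. -/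

import Mathlib

open Complex

noncomputable def cothC (z : ℂ) : ℂ := Complex.cosh z / Complex.sinh z

/-- Möbius action of a 2×2 complex matrix. -/
noncomputable def mobius (A : Matrix (Fin 2) (Fin 2) ℂ) (z : ℂ) : ℂ :=
  (A 0 0 * z + A 0 1) / (A 1 0 * z + A 1 1)

noncomputable def Mmat (c : ℝ) : Matrix (Fin 2) (Fin 2) ℂ :=
  !![Complex.sinh (c / 2), Complex.cosh (c / 2); -Complex.sinh (c / 2), Complex.cosh (c / 2)]

noncomputable def Jmat (c : ℝ) : Matrix (Fin 2) (Fin 2) ℂ :=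
  !![0, -cothC (c / 2); Complex.tanh (c / 2), 0]

noncomputable def Tmat (c : ℝ) (m : ℂ) : Matrix (Fin 2) (Fin 2) ℂ :=
  !![Complex.cosh (m / 2), -Complex.sinh (m / 2) * cothC (c / 2);
     -Complex.sinh (m / 2) * Complex.tanh (c / 2), Complex.cosh (m / 2)]

theorem stmt5 (c : ℝ) (hc : 0 < c) (m : ℂ) (z : ℂ) (hz : 0 < z.im)
    (h0 : z ≠ 0)
    (hT : Tmat c m 1 0 * mobius (Jmat c) z + Tmat c m 1 1 ≠ 0)
    (hM1 : -Complex.sinh (c / 2) * z + Complex.cosh (c / 2) ≠ 0)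
    (hM2 : -Complex.sinh (c / 2) * mobius (Tmat c m) (mobius (Jmat c) z)
        + Complex.cosh (c / 2) ≠ 0)
    (hden : Complex.sinh (c / 2) * z + Complex.cosh (c / 2) ≠ 0) :
    mobius (Mmat c) (mobius (Tmat c m) (mobius (Jmat c) z)) =
      Complex.exp (-m) * (Complex.sinh (c / 2) * z - Complex.cosh (c / 2)) /
        (Complex.sinh (c / 2) * z + Complex.cosh (c / 2)) ∧
    mobius (Mmat c) z * mobius (Mmat c) (mobius (Tmat c m) (mobius (Jmat c) z)) =
      -Complex.exp (-m) := by

  set s : ℂ := Complex.sinh (c / 2) with hs_def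
  set k : ℂ := Complex.cosh (c / 2) with hk_def
  set S : ℂ := Complex.sinh (m / 2) with hS_def
  set K : ℂ := Complex.cosh (m / 2) with hK_def
  have hs : s ≠ 0 := by
    have h : (c:ℂ)/2 = ((c/2:ℝ):ℂ) := by push_cast; ring
    rw [hs_def, h, ← Complex.ofReal_sinh]
    exact_mod_cast ne_of_gt (Real.sinh_pos_iff.mpr (by linarith))
  have hk : k ≠ 0 := by
    have h : (c:ℂ)/2 = ((c/2:ℝ):ℂ) := by push_cast; ring
    rw [hk_def, h, ← Complex.ofReal_cosh]
    exact_mod_cast ne_of_gt (Real.cosh_pos (c/2))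
  have hE : Complex.exp (-m) = (K - S)^2 := by
    rw [hK_def, hS_def, Complex.cosh_sub_sinh, sq, ← Complex.exp_add]; ring_nf
  have hK2 : K^2 - S^2 = 1 := Complex.cosh_sq_sub_sinh_sq _
  have htanh : Complex.tanh ((c:ℂ) / 2) = s / k := Complex.tanh_eq_sinh_div_cosh _
  -- entry lemmas
  have eT00 : Tmat c m 0 0 = K := by simp [Tmat, hK_def]
  have eT01 : Tmat c m 0 1 = -S * (k / s) := by
    simp [Tmat, cothC, hK_def, hS_def, hk_def, hs_def]
  have eT10 : Tmat c m 1 0 = -S * (s / k) := by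
    simp [Tmat, Complex.tanh_eq_sinh_div_cosh, hK_def, hS_def, hk_def, hs_def]
  have eT11 : Tmat c m 1 1 = K := by simp [Tmat, hK_def]
  have eM00 : Mmat c 0 0 = s := by simp [Mmat, hs_def]
  have eM01 : Mmat c 0 1 = k := by simp [Mmat, hk_def]
  have eM10 : Mmat c 1 0 = -s := by simp [Mmat, hs_def]
  have eM11 : Mmat c 1 1 = k := by simp [Mmat, hk_def]
  -- Step 1 : J value
  have hJ : mobius (Jmat c) z = -k^2 / (s^2 * z) := by
    simp only [mobius, Jmat, cothC, htanh, Matrix.cons_val', Matrix.cons_val_zero,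
      Matrix.cons_val_one, Matrix.head_cons, Matrix.head_fin_const, Matrix.empty_val',
      Matrix.cons_val_fin_one, Matrix.of_apply]
    rw [← hs_def, ← hk_def]
    field_simp
    ring
  -- Step 2 : nonvanishing of T denominator
  have heq2 : -S * (s / k) * (-k ^ 2 / (s ^ 2 * z)) + K = (S * k + K * s * z) / (s * z) := by
    field_simp
  have hTne : -S * (s / k) * (-k ^ 2 / (s ^ 2 * z)) + K ≠ 0 := by
    rw [eT10, eT11, hJ] at hT
    exact hT
  have hTd : S * k + K * s * z ≠ 0 := by
    intro h
    exact hTne (by rw [heq2, h, zero_div])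
  have hTd' : k * S + s * K * z ≠ 0 := by convert hTd using 1; ring
  -- Step 3 : T value
  have hTv : mobius (Tmat c m) (mobius (Jmat c) z) =
      -(k * (K * k + S * s * z)) / (s * (S * k + K * s * z)) := by
    rw [mobius, eT00, eT01, eT10, eT11, hJ,
      div_eq_div_iff hTne (mul_ne_zero hs hTd)]
    field_simp
    ring
  -- Step 4 : M value
  rw [hTv] at hM2 ⊢
  have hM2' : -s * (-(k * (K * k + S * s * z)) / (s * (S * k + K * s * z))) + k
      = k * ((K + S) * (k + s * z)) / (S * k + K * s * z) := by
    field_simp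
    ring
  have hnum : s * (-(k * (K * k + S * s * z)) / (s * (S * k + K * s * z))) + k
      = k * ((K - S) * (s * z - k)) / (S * k + K * s * z) := by
    field_simp
    ring
  rw [hM2'] at hM2
  have hKS : (K + S) * (k + s * z) ≠ 0 := by
    intro h
    apply hM2
    rw [h, mul_zero, zero_div]
  have hMden : k * ((K + S) * (k + s * z)) / (S * k + K * s * z) ≠ 0 :=
    div_ne_zero (mul_ne_zero hk hKS) hTd
  have h1 : mobius (Mmat c) (-(k * (K * k + S * s * z)) / (s * (S * k + K * s * z))) =
      Complex.exp (-m) * (s * z - k) / (s * z + k) := by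
    rw [mobius, eM00, eM01, eM10, eM11, hM2', hnum, hE,
      div_eq_div_iff hMden hden]
    have hTd'' : k * S + K * s * z ≠ 0 := by convert hTd using 1; ring
    field_simp
    linear_combination ((K - S) * (k - s * z) * (k + s * z)) * hK2
  refine ⟨h1, ?_⟩
  rw [h1, mobius, eM00, eM01, eM10, eM11, hE, div_mul_div_comm,
    div_eq_iff (mul_ne_zero hM1 hden)]
  ring
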